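/- arXiv:1903.01983 — 3 statements merged into one kernel-verified Lean document; each statement's English description precedes it below -/
import Mathlib

section
/- For every complex s with Re(s) > 1, the Mellin transform ∫_0^∞ x^{s−1} Θ(x) dx equals ξ(s) := (1/2) s(s−1) π^{−s/2} Γ(s/2) ζ(s). -/
open Real MeasureTheory
open Complex Set

noncomputable def Theta (x : ℝ) : ℝ :=
  2 * x ^ 2 * ∑' n : ℕ+, (2 * π ^ 2 * (n : ℝ) ^ 4 * x ^ 2 - 3 * π * (n : ℝ) ^ 2) *
    Real.exp (-π * (n : ℝ) ^ 2 * x ^ 2)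

lemma keyA {r : ℝ} (hr : 0 < r) {w : ℂ} (hw : 0 < w.re) :
    ∫ x in Set.Ioi (0:ℝ), (x:ℂ) ^ (w - 1) * Complex.exp (-(r * x ^ 2) : ℝ) =
      (1 / 2) * (r:ℂ) ^ (-(w / 2)) * Complex.Gamma (w / 2) := by
  have hw2 : 0 < (w / 2).re := by
    rw [Complex.div_ofNat_re]; positivity
  have h1 : mellin (fun t : ℝ => Complex.exp (-(r * t) : ℝ)) (w / 2) =
      (1 / (r:ℂ)) ^ (w / 2) * Complex.Gamma (w / 2) := by
    rw [mellin, ← integral_cpow_mul_exp_neg_mul_Ioi hw2 hr]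
    refine setIntegral_congr_fun measurableSet_Ioi fun t ht => ?_
    rw [smul_eq_mul]
    push_cast
    ring_nf
  have h2 := mellin_comp_rpow (fun t : ℝ => Complex.exp (-(r * t) : ℝ)) w 2
  rw [show ((2:ℝ):ℂ) = (2:ℂ) by norm_num, h1] at h2
  have h3 : mellin (fun t : ℝ => Complex.exp (-(r * t ^ (2:ℝ)) : ℝ)) w =
      ∫ x in Set.Ioi (0:ℝ), (x:ℂ) ^ (w - 1) * Complex.exp (-(r * x ^ 2) : ℝ) := by
    refine setIntegral_congr_fun measurableSet_Ioi fun t ht => ?_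
    simp only [smul_eq_mul]
    norm_num [show (2:ℝ) = ((2:ℕ):ℝ) from by norm_num, Real.rpow_natCast]
  rw [h3] at h2
  rw [h2, real_smul]
  have harg : Complex.arg r ≠ π := by
    rw [Complex.arg_ofReal_of_nonneg hr.le]; exact (Real.pi_ne_zero).symm
  rw [one_div, Complex.inv_cpow _ _ harg, ← Complex.cpow_neg]
  norm_num
  ring

lemma keyD {r : ℝ} (hr : 0 < r) {w : ℂ} (hw : 0 < w.re) :
    IntegrableOn (fun x : ℝ => (x:ℂ) ^ (w - 1) * Complex.exp (-(r * x ^ 2) : ℝ))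
      (Set.Ioi (0:ℝ)) := by
  have hmeas : AEStronglyMeasurable
      (fun x : ℝ => (x:ℂ) ^ (w - 1) * Complex.exp (-(r * x ^ 2) : ℝ))
      (volume.restrict (Set.Ioi (0:ℝ))) := by
    refine ContinuousOn.aestronglyMeasurable ?_ measurableSet_Ioi
    refine ContinuousOn.mul ?_ ?_
    · exact fun x hx => (Complex.continuousAt_ofReal_cpow_const x (w - 1)
        (Or.inr (ne_of_gt hx))).continuousWithinAt
    · exact (Complex.continuous_exp.comp (Complex.continuous_ofReal.comp
        ((continuous_const.mul (continuous_pow 2)).neg))).continuousOn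
  refine Integrable.mono' (g := fun x : ℝ => x ^ (w.re - 1) * Real.exp (-r * x ^ 2))
    ?_ hmeas ?_
  · exact integrableOn_rpow_mul_exp_neg_mul_sq hr (by linarith)
  · filter_upwards [ae_restrict_mem measurableSet_Ioi] with x hx
    rw [norm_mul,
      Complex.norm_cpow_eq_rpow_re_of_pos hx,
      Complex.norm_exp, Complex.ofReal_re, sub_re, one_re, neg_mul]

lemma keyR {r : ℝ} (hr : 0 < r) {p : ℝ} (hp : 0 < p) :
    ∫ x in Set.Ioi (0:ℝ), x ^ (p - 1) * Real.exp (-(r * x ^ 2)) =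
      (1 / 2) * r ^ (-(p / 2)) * Real.Gamma (p / 2) := by
  have h := keyA hr (w := (p:ℂ)) (by simpa using hp)
  have h2 : ∫ x in Set.Ioi (0:ℝ), (x:ℂ) ^ ((p:ℂ) - 1) * Complex.exp (-(r * x ^ 2) : ℝ) =
      ((∫ x in Set.Ioi (0:ℝ), x ^ (p - 1) * Real.exp (-(r * x ^ 2)) : ℝ) : ℂ) := by
    rw [show ((∫ x in Set.Ioi (0:ℝ), x ^ (p - 1) * Real.exp (-(r * x ^ 2)) : ℝ) : ℂ) =
        ∫ x in Set.Ioi (0:ℝ), ((x ^ (p - 1) * Real.exp (-(r * x ^ 2)) : ℝ) : ℂ) from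
        (integral_ofReal).symm]
    refine setIntegral_congr_fun measurableSet_Ioi fun x hx => ?_
    rw [Complex.ofReal_mul, Complex.ofReal_cpow hx.le, Complex.ofReal_exp,
      Complex.ofReal_sub, Complex.ofReal_one]
  rw [h2] at h
  have h3 : ((1 / 2 * r ^ (-(p / 2)) * Real.Gamma (p / 2) : ℝ) : ℂ) =
      (1 / 2) * (r:ℂ) ^ (-((p:ℂ) / 2)) * Complex.Gamma ((p:ℂ) / 2) := by
    rw [show ((p:ℂ)/2) = (((p/2 : ℝ)):ℂ) by push_cast; ring, Complex.Gamma_ofReal,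
      show (-((((p/2:ℝ)):ℂ))) = (((-(p/2) : ℝ)):ℂ) by push_cast; ring,
      ← Complex.ofReal_cpow hr.le]
    push_cast
    ring
  rw [← h3] at h
  exact_mod_cast h

lemma term_val {s : ℂ} (hs : 1 < s.re) (n : ℕ+) :
    (4*(π:ℂ)^2*((n:ℝ):ℂ)^4) *
      ((1/2) * (((π*(n:ℝ)^2 : ℝ)):ℂ) ^ (-((s+4)/2)) * Complex.Gamma ((s+4)/2))
    - (6*(π:ℂ)*((n:ℝ):ℂ)^2) *
      ((1/2) * (((π*(n:ℝ)^2 : ℝ)):ℂ) ^ (-((s+2)/2)) * Complex.Gamma ((s+2)/2))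
    = ((1/2)*s*(s-1)*(π:ℂ)^(-(s/2))*Complex.Gamma (s/2)) * ((n:ℝ):ℂ)^(-s) := by
  have hπ0 : (π:ℂ) ≠ 0 := Complex.ofReal_ne_zero.mpr Real.pi_ne_zero
  have hn : (0:ℝ) < (n:ℝ) := by exact_mod_cast n.pos
  have hn0 : ((n:ℝ):ℂ) ≠ 0 := Complex.ofReal_ne_zero.mpr hn.ne'
  have hre2 : 0 < (s/2).re := by rw [Complex.div_ofNat_re]; linarith
  have hs2 : s/2 ≠ 0 := by
    intro h; rw [h] at hre2; simp at hre2
  have hre21 : 0 < (s/2+1).re := by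
    rw [Complex.add_re, Complex.one_re]; linarith
  have hs21 : s/2 + 1 ≠ 0 := by
    intro h; rw [h] at hre21; simp at hre21
  have harg : ∀ (hlt : True), -π < (2:ℕ) * Complex.arg ((n:ℝ):ℂ) ∧
      (2:ℕ) * Complex.arg ((n:ℝ):ℂ) ≤ π := by
    intro _
    rw [Complex.arg_ofReal_of_nonneg hn.le]
    constructor <;> simp [Real.pi_pos.le]
    linarith [Real.pi_pos]
  have hsplit : ∀ w : ℂ, (((π*(n:ℝ)^2 : ℝ)):ℂ) ^ (-w)
      = (π:ℂ)^(-w) * ((n:ℝ):ℂ)^(-(2*w)) := by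
    intro w
    rw [Complex.ofReal_mul, Complex.mul_cpow_ofReal_nonneg Real.pi_pos.le (sq_nonneg _),
      Complex.ofReal_pow]
    congr 1
    rw [show -(2*w) = ((2:ℕ):ℂ) * (-w) by push_cast; ring,
      Complex.cpow_nat_mul' ((harg trivial).1) ((harg trivial).2)]
  have hΓ4 : Complex.Gamma ((s+4)/2) = (s/2+1)*(s/2)*Complex.Gamma (s/2) := by
    rw [show (s+4)/2 = (s/2+1)+1 by ring, Complex.Gamma_add_one _ hs21,
      Complex.Gamma_add_one _ hs2]
    ring
  have hΓ2 : Complex.Gamma ((s+2)/2) = (s/2)*Complex.Gamma (s/2) := by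
    rw [show (s+2)/2 = (s/2)+1 by ring, Complex.Gamma_add_one _ hs2]
  have h4 : (4*(π:ℂ)^2*((n:ℝ):ℂ)^4) * (((π*(n:ℝ)^2 : ℝ)):ℂ) ^ (-((s+4)/2))
      = 4 * ((π:ℂ)^(-(s/2)) * ((n:ℝ):ℂ)^(-s)) := by
    rw [hsplit,
      show (4*(π:ℂ)^2*((n:ℝ):ℂ)^4) * ((π:ℂ)^(-((s+4)/2)) * ((n:ℝ):ℂ)^(-(2*((s+4)/2))))
        = 4 * ((π:ℂ)^(2:ℕ) * (π:ℂ)^(-((s+4)/2))) *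
          (((n:ℝ):ℂ)^(4:ℕ) * ((n:ℝ):ℂ)^(-(2*((s+4)/2)))) from by ring,
      ← Complex.cpow_natCast (π:ℂ) 2, ← Complex.cpow_add _ _ hπ0,
      ← Complex.cpow_natCast ((n:ℝ):ℂ) 4, ← Complex.cpow_add _ _ hn0,
      show ((2:ℕ):ℂ) + -((s+4)/2) = -(s/2) by push_cast; ring,
      show ((4:ℕ):ℂ) + -(2*((s+4)/2)) = -s by push_cast; ring]
    ring
  have h2 : (6*(π:ℂ)*((n:ℝ):ℂ)^2) * (((π*(n:ℝ)^2 : ℝ)):ℂ) ^ (-((s+2)/2))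
      = 6 * ((π:ℂ)^(-(s/2)) * ((n:ℝ):ℂ)^(-s)) := by
    rw [hsplit,
      show (6*(π:ℂ)*((n:ℝ):ℂ)^2) * ((π:ℂ)^(-((s+2)/2)) * ((n:ℝ):ℂ)^(-(2*((s+2)/2))))
        = 6 * ((π:ℂ)^(1:ℕ) * (π:ℂ)^(-((s+2)/2))) *
          (((n:ℝ):ℂ)^(2:ℕ) * ((n:ℝ):ℂ)^(-(2*((s+2)/2)))) from by ring,
      ← Complex.cpow_natCast (π:ℂ) 1, ← Complex.cpow_add _ _ hπ0,
      ← Complex.cpow_natCast ((n:ℝ):ℂ) 2, ← Complex.cpow_add _ _ hn0,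
      show ((1:ℕ):ℂ) + -((s+2)/2) = -(s/2) by push_cast; ring,
      show ((2:ℕ):ℂ) + -(2*((s+2)/2)) = -s by push_cast; ring]
    ring
  calc (4*(π:ℂ)^2*((n:ℝ):ℂ)^4) *
      ((1/2) * (((π*(n:ℝ)^2 : ℝ)):ℂ) ^ (-((s+4)/2)) * Complex.Gamma ((s+4)/2))
    - (6*(π:ℂ)*((n:ℝ):ℂ)^2) *
      ((1/2) * (((π*(n:ℝ)^2 : ℝ)):ℂ) ^ (-((s+2)/2)) * Complex.Gamma ((s+2)/2))
      = ((4*(π:ℂ)^2*((n:ℝ):ℂ)^4) * (((π*(n:ℝ)^2 : ℝ)):ℂ) ^ (-((s+4)/2))) *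
          ((1/2) * Complex.Gamma ((s+4)/2))
        - ((6*(π:ℂ)*((n:ℝ):ℂ)^2) * (((π*(n:ℝ)^2 : ℝ)):ℂ) ^ (-((s+2)/2))) *
          ((1/2) * Complex.Gamma ((s+2)/2)) := by ring
    _ = ((1/2)*s*(s-1)*(π:ℂ)^(-(s/2))*Complex.Gamma (s/2)) * ((n:ℝ):ℂ)^(-s) := by
        rw [h4, h2, hΓ4, hΓ2]
        ring

lemma term_boundR {σ : ℝ} (hσ : 0 < σ) (n : ℕ+) :
    4*π^2*(n:ℝ)^4 * ((1/2) * (π*(n:ℝ)^2) ^ (-((σ+4)/2)) * Real.Gamma ((σ+4)/2))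
      + 6*π*(n:ℝ)^2 * ((1/2) * (π*(n:ℝ)^2) ^ (-((σ+2)/2)) * Real.Gamma ((σ+2)/2))
    = (2*π^2*π^(-((σ+4)/2))*Real.Gamma ((σ+4)/2)
        + 3*π*π^(-((σ+2)/2))*Real.Gamma ((σ+2)/2)) * (n:ℝ)^(-σ) := by
  have hn : (0:ℝ) < (n:ℝ) := by exact_mod_cast n.pos
  have hstep : ∀ (k : ℕ) (w : ℝ), (n:ℝ)^k * (π*(n:ℝ)^2) ^ (-w)
      = π^(-w) * (n:ℝ) ^ ((k:ℝ) + 2*(-w)) := by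
    intro k w
    rw [Real.mul_rpow Real.pi_pos.le (sq_nonneg _), ← Real.rpow_natCast (n:ℝ) 2,
      ← Real.rpow_mul hn.le, ← Real.rpow_natCast (n:ℝ) k,
      mul_comm (π ^ (-w)) _, ← mul_assoc, ← Real.rpow_add hn]
    push_cast
    ring
  rw [show 4*π^2*(n:ℝ)^4 * ((1/2) * (π*(n:ℝ)^2) ^ (-((σ+4)/2)) * Real.Gamma ((σ+4)/2))
      = 4*π^2*(1/2)*Real.Gamma ((σ+4)/2) * ((n:ℝ)^(4:ℕ) * (π*(n:ℝ)^2) ^ (-((σ+4)/2))) by ring,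
    show 6*π*(n:ℝ)^2 * ((1/2) * (π*(n:ℝ)^2) ^ (-((σ+2)/2)) * Real.Gamma ((σ+2)/2))
      = 6*π*(1/2)*Real.Gamma ((σ+2)/2) * ((n:ℝ)^(2:ℕ) * (π*(n:ℝ)^2) ^ (-((σ+2)/2))) by ring,
    hstep 4, hstep 2,
    show ((4:ℕ):ℝ) + 2*(-((σ+4)/2)) = -σ by push_cast; ring,
    show ((2:ℕ):ℝ) + 2*(-((σ+2)/2)) = -σ by push_cast; ring]
  ring

theorem mellin_theta (s : ℂ) (hs : 1 < s.re) :
    ∫ x in Set.Ioi (0 : ℝ), (x : ℂ) ^ (s - 1) * (Theta x : ℂ) =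
      (1 / 2) * s * (s - 1) * (π : ℂ) ^ (-s / 2) * Complex.Gamma (s / 2) * riemannZeta s := by
  have hre4 : 0 < (s + 4).re := by rw [Complex.add_re]; norm_num; linarith
  have hre2 : 0 < (s + 2).re := by rw [Complex.add_re]; norm_num; linarith
  set F : ℕ+ → ℝ → ℂ := fun n x => (x:ℂ) ^ (s-1) *
    ((2 * x^2 * ((2 * π ^ 2 * (n : ℝ) ^ 4 * x ^ 2 - 3 * π * (n : ℝ) ^ 2) *
      Real.exp (-π * (n : ℝ) ^ 2 * x ^ 2)) : ℝ) : ℂ) with hF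
  have hnpos : ∀ n : ℕ+, (0:ℝ) < (n:ℝ) := fun n => by exact_mod_cast n.pos
  have hrpos : ∀ n : ℕ+, (0:ℝ) < π * (n:ℝ)^2 := fun n => by
    have := hnpos n; positivity
  have hFeq : ∀ n : ℕ+, ∀ x ∈ Set.Ioi (0:ℝ), F n x
      = (4*(π:ℂ)^2*((n:ℝ):ℂ)^4) * ((x:ℂ) ^ ((s+4) - 1) *
          Complex.exp (-(π * (n:ℝ)^2 * x ^ 2) : ℝ))
        - (6*(π:ℂ)*((n:ℝ):ℂ)^2) * ((x:ℂ) ^ ((s+2) - 1) *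
          Complex.exp (-(π * (n:ℝ)^2 * x ^ 2) : ℝ)) := by
    intro n x hx
    have hx0 : (x:ℂ) ≠ 0 := Complex.ofReal_ne_zero.mpr (ne_of_gt hx)
    rw [hF]
    simp only
    rw [show s+4-1 = (s-1) + ((4:ℕ):ℂ) by push_cast; ring, Complex.cpow_add _ _ hx0,
      Complex.cpow_natCast,
      show s+2-1 = (s-1) + ((2:ℕ):ℂ) by push_cast; ring, Complex.cpow_add _ _ hx0,
      Complex.cpow_natCast,
      show -π * (n:ℝ)^2 * x^2 = -(π * (n:ℝ)^2 * x^2) by ring]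
    push_cast
    ring
  have hFint : ∀ n : ℕ+, IntegrableOn (F n) (Set.Ioi 0) := by
    intro n
    refine IntegrableOn.congr_fun ?_ (fun x hx => (hFeq n x hx).symm) measurableSet_Ioi
    exact (((keyD (hrpos n) hre4).const_mul _).sub ((keyD (hrpos n) hre2).const_mul _))
  have hFval : ∀ n : ℕ+, (∫ x in Set.Ioi (0:ℝ), F n x)
      = ((1/2)*s*(s-1)*(π:ℂ)^(-(s/2))*Complex.Gamma (s/2)) * ((n:ℝ):ℂ)^(-s) := by
    intro n
    rw [setIntegral_congr_fun measurableSet_Ioi (hFeq n),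
      integral_sub ((keyD (hrpos n) hre4).const_mul _) ((keyD (hrpos n) hre2).const_mul _),
      integral_const_mul, integral_const_mul, keyA (hrpos n) hre4, keyA (hrpos n) hre2]
    have := term_val hs n
    rw [show (-((s+4)/2)) = -((s+4)/2) by ring] at this
    convert this using 3 <;> push_cast <;> ring
  -- bound functions
  set bound : ℕ+ → ℝ → ℝ := fun n x =>
    4*π^2*(n:ℝ)^4 * (x ^ ((s.re+4) - 1) * Real.exp (-(π * (n:ℝ)^2 * x ^ 2)))
      + 6*π*(n:ℝ)^2 * (x ^ ((s.re+2) - 1) * Real.exp (-(π * (n:ℝ)^2 * x ^ 2))) with hbound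
  have hbint1 : ∀ n : ℕ+, IntegrableOn
      (fun x : ℝ => x ^ ((s.re+4) - 1) * Real.exp (-(π * (n:ℝ)^2 * x ^ 2))) (Set.Ioi 0) := by
    intro n
    exact (integrableOn_rpow_mul_exp_neg_mul_sq (hrpos n)
      (show (-1:ℝ) < s.re + 4 - 1 by linarith)).congr_fun
      (fun x hx => by dsimp only; rw [neg_mul]) measurableSet_Ioi
  have hbint2 : ∀ n : ℕ+, IntegrableOn
      (fun x : ℝ => x ^ ((s.re+2) - 1) * Real.exp (-(π * (n:ℝ)^2 * x ^ 2))) (Set.Ioi 0) := by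
    intro n
    exact (integrableOn_rpow_mul_exp_neg_mul_sq (hrpos n)
      (show (-1:ℝ) < s.re + 2 - 1 by linarith)).congr_fun
      (fun x hx => by dsimp only; rw [neg_mul]) measurableSet_Ioi
  have hboundInt : ∀ n : ℕ+, IntegrableOn (bound n) (Set.Ioi 0) := by
    intro n
    exact ((hbint1 n).const_mul _).add ((hbint2 n).const_mul _)
  have hle : ∀ n : ℕ+, (∫ x in Set.Ioi (0:ℝ), ‖F n x‖) ≤ ∫ x in Set.Ioi (0:ℝ), bound n x := by
    intro n
    refine integral_mono_of_nonneg (Filter.Eventually.of_forall fun x => norm_nonneg _)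
      (hboundInt n) ?_
    filter_upwards [ae_restrict_mem measurableSet_Ioi] with x hx
    have hx' : (0:ℝ) < x := hx
    rw [hF]
    simp only
    rw [norm_mul, Complex.norm_cpow_eq_rpow_re_of_pos hx',
      Complex.sub_re, Complex.one_re, Complex.norm_real, Real.norm_eq_abs]
    have h1 : |2 * π ^ 2 * (n : ℝ) ^ 4 * x ^ 2 - 3 * π * (n : ℝ) ^ 2|
        ≤ 2 * π ^ 2 * (n : ℝ) ^ 4 * x ^ 2 + 3 * π * (n : ℝ) ^ 2 := by
      refine (abs_sub _ _).trans ?_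
      have := hnpos n
      rw [_root_.abs_of_nonneg (by positivity), _root_.abs_of_nonneg (by positivity)]
    calc x ^ (s.re - 1) * |2 * x^2 * ((2 * π ^ 2 * (n : ℝ) ^ 4 * x ^ 2 - 3 * π * (n : ℝ) ^ 2) *
          Real.exp (-π * (n : ℝ) ^ 2 * x ^ 2))|
        = (x ^ (s.re - 1) * (2 * x^2)) *
          (|2 * π ^ 2 * (n : ℝ) ^ 4 * x ^ 2 - 3 * π * (n : ℝ) ^ 2| *
            Real.exp (-π * (n : ℝ) ^ 2 * x ^ 2)) := by
          rw [abs_mul (2 * x^2) _, abs_mul (2 * π ^ 2 * (n : ℝ) ^ 4 * x ^ 2 - 3 * π * (n : ℝ) ^ 2) _,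
            _root_.abs_of_nonneg (show (0:ℝ) ≤ 2 * x^2 by positivity),
            _root_.abs_of_nonneg (Real.exp_nonneg _)]
          ring
      _ ≤ (x ^ (s.re - 1) * (2 * x^2)) *
          ((2 * π ^ 2 * (n : ℝ) ^ 4 * x ^ 2 + 3 * π * (n : ℝ) ^ 2) *
            Real.exp (-π * (n : ℝ) ^ 2 * x ^ 2)) := by
          refine mul_le_mul_of_nonneg_left
            (mul_le_mul_of_nonneg_right h1 (Real.exp_nonneg _))
            (mul_nonneg (Real.rpow_nonneg hx'.le _) (by positivity))
      _ = bound n x := by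
          rw [hbound]
          simp only
          rw [show (s.re+4) - 1 = (s.re - 1) + ((4:ℕ):ℝ) by push_cast; ring,
            Real.rpow_add hx', Real.rpow_natCast,
            show (s.re+2) - 1 = (s.re - 1) + ((2:ℕ):ℝ) by push_cast; ring,
            Real.rpow_add hx', Real.rpow_natCast,
            show -π * (n:ℝ)^2 * x^2 = -(π * (n:ℝ)^2 * x^2) by ring]
          ring
  have hboundVal : ∀ n : ℕ+, (∫ x in Set.Ioi (0:ℝ), bound n x)
      = (2*π^2*π^(-((s.re+4)/2))*Real.Gamma ((s.re+4)/2)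
        + 3*π*π^(-((s.re+2)/2))*Real.Gamma ((s.re+2)/2)) * (n:ℝ)^(-s.re) := by
    intro n
    rw [hbound]
    simp only
    rw [integral_add ((hbint1 n).const_mul _) ((hbint2 n).const_mul _),
      integral_const_mul, integral_const_mul,
      keyR (hrpos n) (by linarith : (0:ℝ) < s.re + 4),
      keyR (hrpos n) (by linarith : (0:ℝ) < s.re + 2)]
    exact term_boundR (by linarith) n
  have hsummable : Summable (fun n : ℕ+ => ∫ x in Set.Ioi (0:ℝ), ‖F n x‖) := by
    refine Summable.of_nonneg_of_le (fun n => integral_nonneg fun x => norm_nonneg _)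
      (fun n => hle n) ?_
    have h1 : Summable (fun n : ℕ+ => (n:ℝ) ^ (-s.re)) := by
      have h2 : Summable (fun k : ℕ => (k:ℝ) ^ (-s.re)) :=
        Real.summable_nat_rpow.mpr (by linarith)
      exact (h2.comp_injective PNat.coe_injective).congr fun n => rfl
    have := (h1.mul_left (2*π^2*π^(-((s.re+4)/2))*Real.Gamma ((s.re+4)/2)
        + 3*π*π^(-((s.re+2)/2))*Real.Gamma ((s.re+2)/2)))
    refine this.congr fun n => ?_
    rw [hboundVal n]
  have hpt : ∀ x ∈ Set.Ioi (0:ℝ), (x:ℂ) ^ (s-1) * (Theta x : ℂ) = ∑' n : ℕ+, F n x := by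
    intro x hx
    have e1 : ∑' n : ℕ+, F n x = ((x:ℂ)^(s-1) * (2*(x:ℂ)^2)) *
        ∑' n : ℕ+, (((2 * π ^ 2 * (n : ℝ) ^ 4 * x ^ 2 - 3 * π * (n : ℝ) ^ 2) *
          Real.exp (-π * (n : ℝ) ^ 2 * x ^ 2) : ℝ) : ℂ) := by
      rw [← tsum_mul_left]
      refine tsum_congr fun n => ?_
      rw [hF]
      push_cast
      ring
    rw [e1, Theta]
    push_cast
    ring
  have hζ : (∑' n : ℕ+, ((n:ℝ):ℂ)^(-s)) = riemannZeta s := by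
    rw [zeta_eq_tsum_one_div_nat_add_one_cpow hs,
      ← Equiv.tsum_eq Equiv.pnatEquivNat.symm (fun n : ℕ+ => ((n:ℝ):ℂ)^(-s))]
    refine tsum_congr fun k => ?_
    have hk : (((Equiv.pnatEquivNat.symm k : ℕ+) : ℝ) : ℂ) = ((k:ℂ) + 1) := by
      simp [Equiv.pnatEquivNat]
    rw [hk, Complex.cpow_neg, one_div]
  calc ∫ x in Set.Ioi (0:ℝ), (x:ℂ) ^ (s-1) * (Theta x : ℂ)
      = ∫ x in Set.Ioi (0:ℝ), ∑' n : ℕ+, F n x :=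
        setIntegral_congr_fun measurableSet_Ioi hpt
    _ = ∑' n : ℕ+, ∫ x in Set.Ioi (0:ℝ), F n x :=
        (MeasureTheory.integral_tsum_of_summable_integral_norm hFint hsummable).symm
    _ = ∑' n : ℕ+, ((1/2)*s*(s-1)*(π:ℂ)^(-(s/2))*Complex.Gamma (s/2)) * ((n:ℝ):ℂ)^(-s) :=
        tsum_congr hFval
    _ = ((1/2)*s*(s-1)*(π:ℂ)^(-(s/2))*Complex.Gamma (s/2)) * ∑' n : ℕ+, ((n:ℝ):ℂ)^(-s) :=
        tsum_mul_left
    _ = (1 / 2) * s * (s - 1) * (π : ℂ) ^ (-s / 2) * Complex.Gamma (s / 2) * riemannZeta s := by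
        rw [hζ, neg_div]
end

section
/- For x > 0, x Σ_{n≥1} n K_1(2xn√π) = √π ∫_0^∞ e^{−(xy)²} ( y^{−3} Σ_{n≥1} n² e^{−πn²/y²} ) dy. -/
open Real MeasureTheory Set

set_option maxHeartbeats 1000000

noncomputable def besselK (s : ℝ) (x : ℝ) : ℝ :=
  ∫ t in Set.Ioi (0 : ℝ), Real.exp (-x * Real.cosh t) * Real.cosh (s * t)


lemma intG {p q : ℝ} (hp : 0 < p) (hq : 0 ≤ q) :
    IntegrableOn (fun t : ℝ => Real.exp (-(p * t + q / t))) (Set.Ioi 0) := by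
  have hmeas : AEStronglyMeasurable (fun t : ℝ => Real.exp (-(p * t + q / t)))
      (volume.restrict (Set.Ioi 0)) := by
    apply ContinuousOn.aestronglyMeasurable ?_ measurableSet_Ioi
    apply Real.continuous_exp.comp_continuousOn
    apply ContinuousOn.neg
    exact (continuousOn_const.mul continuousOn_id).add
      (continuousOn_const.div continuousOn_id fun t ht => ne_of_gt ht)
  refine Integrable.mono (exp_neg_integrableOn_Ioi 0 hp) hmeas ?_
  filter_upwards [ae_restrict_mem measurableSet_Ioi] with t ht
  rw [Real.norm_eq_abs, Real.norm_eq_abs, abs_of_nonneg (Real.exp_nonneg _),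
    abs_of_nonneg (Real.exp_nonneg _)]
  apply Real.exp_le_exp.mpr
  have h0 : 0 ≤ q / t := div_nonneg hq (le_of_lt ht)
  nlinarith

lemma integral_exp_cov (g : ℝ → ℝ) :
    ∫ u in Set.Ioi (0:ℝ), g u = ∫ t : ℝ, Real.exp t * g (Real.exp t) := by
  have h := integral_image_eq_integral_abs_deriv_smul (s := (Set.univ : Set ℝ))
    MeasurableSet.univ (f := Real.exp) (f' := Real.exp)
    (fun t _ => (Real.hasDerivAt_exp t).hasDerivWithinAt) (Real.exp_injective.injOn) g
  rw [Set.image_univ, Real.range_exp] at h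
  rw [h, MeasureTheory.setIntegral_univ]
  simp only [Real.abs_exp, smul_eq_mul]

lemma integrable_exp_cov_iff (g : ℝ → ℝ) :
    IntegrableOn g (Set.Ioi 0) ↔ Integrable (fun t : ℝ => Real.exp t * g (Real.exp t)) := by
  have h := integrableOn_image_iff_integrableOn_abs_deriv_smul (s := (Set.univ : Set ℝ))
    (f := Real.exp) (f' := Real.exp) MeasurableSet.univ
    (fun t _ => (Real.hasDerivAt_exp t).hasDerivWithinAt) (Real.exp_injective.injOn) g
  rw [Set.image_univ, Real.range_exp, integrableOn_univ] at h
  simp only [Real.abs_exp, smul_eq_mul] at h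
  exact h

lemma besselK_one (b : ℝ) :
    besselK 1 b = ∫ t in Set.Ioi (0:ℝ), Real.exp (-b * Real.cosh t) * Real.cosh t := by
  unfold besselK; simp only [one_mul]

lemma hE (a t : ℝ) : Real.exp t * Real.exp (-(a * Real.exp t + a / Real.exp t))
    = Real.exp t * Real.exp (-(2*a) * Real.cosh t) := by
  have h : -(a * Real.exp t + a / Real.exp t) = -(2*a) * Real.cosh t := by
    rw [Real.cosh_eq, Real.exp_neg]
    field_simp
  rw [h]

lemma hF_int {a : ℝ} (ha : 0 < a) :
    Integrable (fun t : ℝ => Real.exp t * Real.exp (-(2*a) * Real.cosh t)) := by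
  have := (integrable_exp_cov_iff (fun u => Real.exp (-(a * u + a / u)))).mp (intG ha ha.le)
  refine this.congr ?_
  filter_upwards with t
  exact hE a t

lemma besselK_integrand_int {b : ℝ} (hb : 0 < b) :
    IntegrableOn (fun t : ℝ => Real.exp (-b * Real.cosh t) * Real.cosh t) (Set.Ioi 0) := by
  have hb2 : (0:ℝ) < b/2 := by linarith
  have h : IntegrableOn (fun t : ℝ => Real.exp t * Real.exp (-(2*(b/2)) * Real.cosh t))
      (Set.Ioi 0) := (hF_int hb2).integrableOn
  have hb' : 2 * (b/2) = b := by ring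
  rw [hb'] at h
  refine Integrable.mono h ?_ ?_
  · apply ContinuousOn.aestronglyMeasurable ?_ measurableSet_Ioi
    exact ((Real.continuous_exp.comp (continuous_const.mul Real.continuous_cosh)).mul
      Real.continuous_cosh).continuousOn
  · filter_upwards [ae_restrict_mem measurableSet_Ioi] with t ht
    rw [Real.norm_eq_abs, Real.norm_eq_abs, abs_of_nonneg, abs_of_nonneg]
    · rw [mul_comm]
      apply mul_le_mul_of_nonneg_right _ (Real.exp_nonneg _)
      rw [Real.cosh_eq]
      have h1 : Real.exp (-t) ≤ Real.exp t := Real.exp_le_exp.mpr (by linarith [le_of_lt (Set.mem_Ioi.mp ht)])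
      linarith
    · positivity
    · positivity

lemma besselK_eq {a : ℝ} (ha : 0 < a) :
    ∫ u in Set.Ioi (0:ℝ), Real.exp (-(a * u + a / u)) = 2 * besselK 1 (2 * a) := by
  set E : ℝ → ℝ := fun t => Real.exp (-(2*a) * Real.cosh t) with hEdef
  have hF : Integrable (fun t : ℝ => Real.exp t * E t) := hF_int ha
  rw [integral_exp_cov]
  have hcong : (fun t : ℝ => Real.exp t * Real.exp (-(a * Real.exp t + a / Real.exp t)))
      = fun t : ℝ => Real.exp t * E t := by
    funext t; exact hE a t
  rw [hcong]
  rw [← intervalIntegral.integral_Iic_add_Ioi (b := 0) hF.integrableOn hF.integrableOn]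
  have hneg : (∫ t in Set.Iic (0:ℝ), Real.exp t * E t)
      = ∫ t in Set.Ioi (0:ℝ), Real.exp (-t) * E t := by
    have h0 : ∫ t in Set.Ioi (0:ℝ), Real.exp (-t) * E (-t) = ∫ t in Set.Iic (-(0:ℝ)), Real.exp t * E t :=
      integral_comp_neg_Ioi 0 (fun t => Real.exp t * E t)
    rw [neg_zero] at h0
    rw [← h0]
    congr 1; funext t
    simp only [hEdef, Real.cosh_neg]
  rw [hneg]
  have hint2 : IntegrableOn (fun t : ℝ => Real.exp (-t) * E t) (Set.Ioi 0) := by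
    refine Integrable.mono hF.integrableOn ?_ ?_
    · apply ContinuousOn.aestronglyMeasurable ?_ measurableSet_Ioi
      exact ((Real.continuous_exp.comp continuous_neg).mul
        ((Real.continuous_exp.comp (continuous_const.mul Real.continuous_cosh)))).continuousOn
    · filter_upwards [ae_restrict_mem measurableSet_Ioi] with t ht
      rw [Real.norm_eq_abs, Real.norm_eq_abs, abs_of_nonneg (by positivity), abs_of_nonneg (by positivity)]
      apply mul_le_mul_of_nonneg_right _ (Real.exp_nonneg _)
      exact Real.exp_le_exp.mpr (by linarith [le_of_lt (Set.mem_Ioi.mp ht)])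
  rw [← MeasureTheory.integral_add hint2 hF.integrableOn, besselK_one]
  rw [← integral_const_mul]
  apply setIntegral_congr_fun measurableSet_Ioi
  intro t _
  simp only [hEdef, Real.cosh_eq]
  ring

lemma sqrt_pq {p q : ℝ} (hp : 0 < p) (hq : 0 < q) :
    p * Real.sqrt (q / p) = Real.sqrt (p * q) ∧ q / Real.sqrt (q / p) = Real.sqrt (p * q) := by
  have hc : 0 < Real.sqrt (q / p) := Real.sqrt_pos.mpr (div_pos hq hp)
  constructor
  · rw [show p * q = (p * Real.sqrt (q / p))^2 by
      rw [mul_pow, Real.sq_sqrt (div_pos hq hp).le]; field_simp]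
    exact (Real.sqrt_sq (by positivity)).symm
  · rw [show p * q = (q / Real.sqrt (q / p))^2 by
      rw [div_pow, Real.sq_sqrt (div_pos hq hp).le]; field_simp]
    exact (Real.sqrt_sq (by positivity)).symm

lemma integral_exp_pq {p q : ℝ} (hp : 0 < p) (hq : 0 < q) :
    ∫ t in Set.Ioi (0:ℝ), Real.exp (-(p * t + q / t))
      = 2 * Real.sqrt (q / p) * besselK 1 (2 * Real.sqrt (p * q)) := by
  obtain ⟨h1, h2⟩ := sqrt_pq hp hq
  set c := Real.sqrt (q / p) with hc
  have hcpos : 0 < c := Real.sqrt_pos.mpr (div_pos hq hp)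
  have h := integral_comp_mul_left_Ioi
    (fun t => Real.exp (-(p * t + q / t))) 0 hcpos
  rw [mul_zero] at h
  have hkey : (fun t : ℝ => Real.exp (-(p * (c * t) + q / (c * t))))
      = fun t : ℝ => Real.exp (-(Real.sqrt (p*q) * t + Real.sqrt (p*q) / t)) := by
    funext t
    rw [show p * (c*t) = p*c*t by ring, h1, div_mul_eq_div_div, h2]
  rw [hkey] at h
  beta_reduce at h
  have h3 : ∫ t in Set.Ioi (0:ℝ), Real.exp (-(p * t + q / t))
      = c * ∫ t in Set.Ioi (0:ℝ), Real.exp (-(Real.sqrt (p*q) * t + Real.sqrt (p*q) / t)) := by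
    rw [h, smul_eq_mul, ← mul_assoc, mul_inv_cancel₀ (ne_of_gt hcpos), one_mul]
  rw [h3, besselK_eq (Real.sqrt_pos.mpr (mul_pos hp hq))]
  ring

lemma cov_inv_sq {p q : ℝ} (hp : 0 < p) (hq : 0 < q) :
    (∫ y in Set.Ioi (0:ℝ), (2 / y^3) * Real.exp (-(p / y^2 + q * y^2))
      = 2 * Real.sqrt (q / p) * besselK 1 (2 * Real.sqrt (p * q)))
    ∧ IntegrableOn (fun y : ℝ => (2 / y^3) * Real.exp (-(p / y^2 + q * y^2))) (Set.Ioi 0) := by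
  have hderiv : ∀ y ∈ Set.Ioi (0:ℝ),
      HasDerivWithinAt (fun y : ℝ => (y^2)⁻¹) (-(2*y) / (y^2)^2) (Set.Ioi 0) y := by
    intro y hy
    have h0 : (y:ℝ)^2 ≠ 0 := pow_ne_zero _ (ne_of_gt hy)
    have := (hasDerivAt_pow 2 y).inv h0
    exact this.hasDerivWithinAt.congr_deriv (by norm_num)
  have hinj : Set.InjOn (fun y : ℝ => (y^2)⁻¹) (Set.Ioi 0) := by
    intro a ha b hb hab
    simp only at hab
    have h2 : a^2 = b^2 := inv_injective hab
    have h3 : (a - b) * (a + b) = 0 := by linear_combination h2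
    rcases mul_eq_zero.mp h3 with h | h
    · linarith
    · exfalso; simp only [Set.mem_Ioi] at ha hb; linarith
  have himg : (fun y : ℝ => (y^2)⁻¹) '' Set.Ioi 0 = Set.Ioi 0 := by
    ext t
    simp only [Set.mem_image, Set.mem_Ioi]
    constructor
    · rintro ⟨y, hy, rfl⟩; positivity
    · intro ht
      exact ⟨Real.sqrt t⁻¹, Real.sqrt_pos.mpr (inv_pos.mpr ht), by
        rw [Real.sq_sqrt (inv_nonneg.mpr ht.le), inv_inv]⟩
  set g : ℝ → ℝ := fun t => Real.exp (-(p * t + q / t)) with hg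
  have hEq : Set.EqOn (fun y : ℝ => |(-(2*y) / (y^2)^2)| • g ((y^2)⁻¹))
      (fun y : ℝ => (2 / y^3) * Real.exp (-(p / y^2 + q * y^2))) (Set.Ioi 0) := by
    intro y hy
    simp only [Set.mem_Ioi] at hy
    simp only [hg, smul_eq_mul]
    have h1 : |(-(2*y) / (y^2)^2)| = 2 / y^3 := by
      rw [abs_div, abs_neg, abs_of_nonneg (by positivity : (0:ℝ) ≤ 2*y),
        abs_of_nonneg (by positivity : (0:ℝ) ≤ (y^2)^2)]
      field_simp
    rw [h1]
    congr 2
    field_simp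
  constructor
  · have h := integral_image_eq_integral_abs_deriv_smul measurableSet_Ioi hderiv hinj g
    rw [himg] at h
    rw [← setIntegral_congr_fun measurableSet_Ioi hEq, ← h, hg]
    exact integral_exp_pq hp hq
  · have h := (integrableOn_image_iff_integrableOn_abs_deriv_smul measurableSet_Ioi
      hderiv hinj g).mp (by rw [himg]; exact intG hp hq.le)
    exact (h.congr_fun hEq measurableSet_Ioi)

lemma besselK_nonneg (b : ℝ) : 0 ≤ besselK 1 b := by
  rw [besselK_one]
  exact setIntegral_nonneg measurableSet_Ioi fun t _ =>
    mul_nonneg (Real.exp_nonneg _) (Real.cosh_pos _).le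

lemma besselK_le {a b : ℝ} (ha : 0 < a) (hab : a ≤ b) :
    besselK 1 b ≤ Real.exp (a - b) * besselK 1 a := by
  rw [besselK_one, besselK_one, ← integral_const_mul]
  apply setIntegral_mono_on (besselK_integrand_int (lt_of_lt_of_le ha hab))
    ((besselK_integrand_int ha).const_mul _) measurableSet_Ioi
  intro t _
  have hch : 1 ≤ Real.cosh t := Real.one_le_cosh t
  have h1 : Real.exp (-b * Real.cosh t) ≤ Real.exp (a - b) * Real.exp (-a * Real.cosh t) := by
    rw [← Real.exp_add]
    apply Real.exp_le_exp.mpr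
    nlinarith [mul_nonneg (sub_nonneg.mpr hab) (sub_nonneg.mpr hch)]
  calc Real.exp (-b * Real.cosh t) * Real.cosh t
      ≤ (Real.exp (a - b) * Real.exp (-a * Real.cosh t)) * Real.cosh t :=
        mul_le_mul_of_nonneg_right h1 (Real.cosh_pos _).le
    _ = Real.exp (a - b) * (Real.exp (-a * Real.cosh t) * Real.cosh t) := by ring

lemma term_int {x : ℝ} (hx : 0 < x) (n : ℕ+) :
    ((∫ y in Set.Ioi (0:ℝ), Real.exp (-(x*y)^2) *
        ((y:ℝ)^(-3:ℤ) * ((n:ℝ)^2 * Real.exp (-π*(n:ℝ)^2/y^2))))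
      = x * (n:ℝ) / Real.sqrt π * besselK 1 (2*x*(n:ℝ)*Real.sqrt π))
    ∧ IntegrableOn (fun y : ℝ => Real.exp (-(x*y)^2) *
        ((y:ℝ)^(-3:ℤ) * ((n:ℝ)^2 * Real.exp (-π*(n:ℝ)^2/y^2)))) (Set.Ioi 0) := by
  have hnpos : (0:ℝ) < (n:ℝ) := by exact_mod_cast n.pos
  have hp : (0:ℝ) < π*(n:ℝ)^2 := by positivity
  have hq : (0:ℝ) < x^2 := by positivity
  obtain ⟨hI, hInt⟩ := cov_inv_sq hp hq
  have hEq : Set.EqOn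
      (fun y : ℝ => (n:ℝ)^2/2 * ((2/y^3) * Real.exp (-(π*(n:ℝ)^2/y^2 + x^2*y^2))))
      (fun y : ℝ => Real.exp (-(x*y)^2) *
        ((y:ℝ)^(-3:ℤ) * ((n:ℝ)^2 * Real.exp (-π*(n:ℝ)^2/y^2)))) (Set.Ioi 0) := by
    intro y hy
    simp only [Set.mem_Ioi] at hy
    have hy3 : (y:ℝ)^(-3:ℤ) = (y^3)⁻¹ := by
      rw [zpow_neg]; norm_cast
    have hexp : Real.exp (-(π*(n:ℝ)^2/y^2 + x^2*y^2))
        = Real.exp (-(x*y)^2) * Real.exp (-π*(n:ℝ)^2/y^2) := by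
      rw [← Real.exp_add]; congr 1; ring
    beta_reduce
    rw [hy3, hexp]
    field_simp
  have h1 : Real.sqrt (x^2/(π*(n:ℝ)^2)) = x/(Real.sqrt π * (n:ℝ)) := by
    rw [show x^2/(π*(n:ℝ)^2) = (x/(Real.sqrt π * (n:ℝ)))^2 by
      rw [div_pow, mul_pow, Real.sq_sqrt Real.pi_pos.le]]
    exact Real.sqrt_sq (by positivity)
  have h2 : 2*Real.sqrt (π*(n:ℝ)^2*x^2) = 2*x*(n:ℝ)*Real.sqrt π := by
    rw [show π*(n:ℝ)^2*x^2 = (x*(n:ℝ)*Real.sqrt π)^2 by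
      rw [mul_pow, mul_pow, Real.sq_sqrt Real.pi_pos.le]; ring]
    rw [Real.sqrt_sq (by positivity)]
    ring
  constructor
  · rw [← setIntegral_congr_fun measurableSet_Ioi hEq, integral_const_mul, hI, h1, h2]
    have hsp : (0:ℝ) < Real.sqrt π := Real.sqrt_pos.mpr Real.pi_pos
    field_simp
  · exact IntegrableOn.congr_fun (hInt.const_mul ((n:ℝ)^2/2)) hEq measurableSet_Ioi

lemma summable_nK {x : ℝ} (hx : 0 < x) :
    Summable (fun n : ℕ+ => (n:ℝ) * besselK 1 (2*x*(n:ℝ)*Real.sqrt π)) := by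
  set a : ℝ := 2*x*Real.sqrt π with ha
  have hsp : (0:ℝ) < Real.sqrt π := Real.sqrt_pos.mpr Real.pi_pos
  have hapos : 0 < a := by positivity
  have hr : ‖Real.exp (-a)‖ < 1 := by
    rw [Real.norm_eq_abs, abs_of_pos (Real.exp_pos _)]
    exact Real.exp_lt_one_iff.mpr (by linarith)
  have hg : Summable (fun m : ℕ => (m:ℝ)^1 * Real.exp (-a)^m) :=
    summable_pow_mul_geometric_of_norm_lt_one 1 hr
  have hg' : Summable (fun m : ℕ => (Real.exp a * besselK 1 a) * ((m:ℝ)^1 * Real.exp (-a)^m)) :=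
    hg.mul_left _
  have hgP : Summable (fun n : ℕ+ =>
      (Real.exp a * besselK 1 a) * (((n:ℕ):ℝ)^1 * Real.exp (-a)^(n:ℕ))) :=
    hg'.comp_injective PNat.coe_injective
  apply Summable.of_nonneg_of_le ?_ ?_ hgP
  · intro n
    exact mul_nonneg (by positivity) (besselK_nonneg _)
  · intro n
    have hn1 : (1:ℝ) ≤ (n:ℝ) := by exact_mod_cast n.one_le
    have hab : a ≤ 2*x*(n:ℝ)*Real.sqrt π := by
      rw [ha]; nlinarith
    have hK := besselK_le hapos hab
    have hexp : Real.exp (a - 2*x*(n:ℝ)*Real.sqrt π) ≤ Real.exp a * Real.exp (-a)^(n:ℕ) := by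
      rw [← Real.exp_nat_mul, ← Real.exp_add]
      apply Real.exp_le_exp.mpr
      have : ((n:ℕ):ℝ) = (n:ℝ) := by norm_cast
      rw [this, ha]
      nlinarith
    have hKn : besselK 1 (2*x*(n:ℝ)*Real.sqrt π)
        ≤ Real.exp a * Real.exp (-a)^(n:ℕ) * besselK 1 a := by
      calc besselK 1 (2*x*(n:ℝ)*Real.sqrt π)
          ≤ Real.exp (a - 2*x*(n:ℝ)*Real.sqrt π) * besselK 1 a := hK
        _ ≤ Real.exp a * Real.exp (-a)^(n:ℕ) * besselK 1 a :=
            mul_le_mul_of_nonneg_right hexp (besselK_nonneg _)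
    have hcast : ((n:ℕ):ℝ) = (n:ℝ) := by norm_cast
    calc (n:ℝ) * besselK 1 (2*x*(n:ℝ)*Real.sqrt π)
        ≤ (n:ℝ) * (Real.exp a * Real.exp (-a)^(n:ℕ) * besselK 1 a) :=
          mul_le_mul_of_nonneg_left hKn (by positivity)
      _ = (Real.exp a * besselK 1 a) * (((n:ℕ):ℝ)^1 * Real.exp (-a)^(n:ℕ)) := by
          rw [hcast]; ring

theorem series_integral_identity (x : ℝ) (hx : 0 < x) :
    x * ∑' n : ℕ+, (n : ℝ) * besselK 1 (2 * x * (n : ℝ) * Real.sqrt π) =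
      Real.sqrt π *
        ∫ y in Set.Ioi (0 : ℝ),
          Real.exp (-(x * y) ^ 2) *
            (y ^ (-3 : ℤ) * ∑' n : ℕ+, (n : ℝ) ^ 2 * Real.exp (-π * (n : ℝ) ^ 2 / y ^ 2)) := by
  have hsp : (0:ℝ) < Real.sqrt π := Real.sqrt_pos.mpr Real.pi_pos
  set f : ℕ+ → ℝ → ℝ := fun n y => Real.exp (-(x*y)^2) *
      ((y:ℝ)^(-3:ℤ) * ((n:ℝ)^2 * Real.exp (-π*(n:ℝ)^2/y^2))) with hf
  have hval : ∀ n : ℕ+, (∫ y in Set.Ioi (0:ℝ), f n y)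
      = x * (n:ℝ) / Real.sqrt π * besselK 1 (2*x*(n:ℝ)*Real.sqrt π) := fun n => (term_int hx n).1
  have hint : ∀ n : ℕ+, IntegrableOn (f n) (Set.Ioi 0) := fun n => (term_int hx n).2
  have hnn : ∀ n : ℕ+, 0 ≤ x * (n:ℝ) / Real.sqrt π * besselK 1 (2*x*(n:ℝ)*Real.sqrt π) := by
    intro n
    have hnpos : (0:ℝ) < (n:ℝ) := by exact_mod_cast n.pos
    exact mul_nonneg (by positivity) (besselK_nonneg _)
  have hsum : Summable (fun n : ℕ+ =>
      x * (n:ℝ) / Real.sqrt π * besselK 1 (2*x*(n:ℝ)*Real.sqrt π)) := by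
    refine ((summable_nK hx).mul_left (x / Real.sqrt π)).congr fun n => ?_
    ring
  have hlint : ∀ n : ℕ+, (∫⁻ y in Set.Ioi (0:ℝ), ‖f n y‖ₑ)
      = ENNReal.ofReal (x * (n:ℝ) / Real.sqrt π * besselK 1 (2*x*(n:ℝ)*Real.sqrt π)) := by
    intro n
    have hfnn : 0 ≤ᵐ[volume.restrict (Set.Ioi 0)] f n := by
      filter_upwards [ae_restrict_mem measurableSet_Ioi] with y hy
      simp only [Set.mem_Ioi] at hy
      have : (0:ℝ) ≤ (y:ℝ)^(-3:ℤ) := zpow_nonneg hy.le _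
      exact mul_nonneg (Real.exp_nonneg _) (mul_nonneg this (by positivity))
    rw [← hval n, ofReal_integral_eq_lintegral_ofReal (hint n) hfnn]
    apply lintegral_congr_ae
    filter_upwards [hfnn] with y hy
    rw [Real.enorm_eq_ofReal hy]
  have key : (∫ y in Set.Ioi (0:ℝ), ∑' n : ℕ+, f n y)
      = ∑' n : ℕ+, x * (n:ℝ) / Real.sqrt π * besselK 1 (2*x*(n:ℝ)*Real.sqrt π) := by
    rw [integral_tsum (fun n => (hint n).aestronglyMeasurable) ?_]
    · exact tsum_congr fun n => hval n
    · rw [tsum_congr hlint, ← ENNReal.ofReal_tsum_of_nonneg hnn hsum]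
      exact ENNReal.ofReal_ne_top
  have hrw : (fun y : ℝ => Real.exp (-(x * y) ^ 2) *
      (y ^ (-3 : ℤ) * ∑' n : ℕ+, (n : ℝ) ^ 2 * Real.exp (-π * (n : ℝ) ^ 2 / y ^ 2)))
      = fun y => ∑' n : ℕ+, f n y := by
    funext y
    rw [← tsum_mul_left, ← tsum_mul_left]
  rw [hrw, key]
  have : ∑' n : ℕ+, x * (n:ℝ) / Real.sqrt π * besselK 1 (2*x*(n:ℝ)*Real.sqrt π)
      = (x / Real.sqrt π) * ∑' n : ℕ+, (n:ℝ) * besselK 1 (2*x*(n:ℝ)*Real.sqrt π) := by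
    rw [← tsum_mul_left]
    exact tsum_congr fun n => by ring
  rw [this]
  field_simp
  ring_nf
  exact tsum_congr fun n => by ring
end

section
/- For x > 0, the function ψ(x) := 4π x^{−3} Σ_{n≥1} n² e^{−πn²/x²} is nondecreasing on (0,∞), tends to 0 as x → 0⁺, and tends to 1 as x → ∞. -/
open Real Filter

noncomputable def psi (x : ℝ) : ℝ :=
  4 * π * x ^ (-3 : ℤ) * ∑' n : ℕ+, (n : ℝ) ^ 2 * Real.exp (-π * (n : ℝ) ^ 2 / x ^ 2)

private lemma summable_master (k : ℕ) {c : ℝ} (hc : 0 < c) :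
    Summable (fun n : ℕ => ((n : ℝ) + 1) ^ k * Real.exp (-c * ((n : ℝ) + 1) ^ 2)) := by
  have h := Real.summable_pow_mul_exp_neg_nat_mul k hc
  have h1 : Summable (fun n : ℕ => ((n + 1 : ℕ) : ℝ) ^ k * Real.exp (-c * ((n + 1 : ℕ) : ℝ))) :=
    (summable_nat_add_iff 1).mpr h
  refine Summable.of_nonneg_of_le (fun n => by positivity) (fun n => ?_) h1
  push_cast
  have hn : (0 : ℝ) ≤ (n : ℝ) := Nat.cast_nonneg n
  have key : -c * ((n : ℝ) + 1) ^ 2 ≤ -c * ((n : ℝ) + 1) := by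
    nlinarith [mul_nonneg (mul_nonneg hc.le hn) (by linarith : (0 : ℝ) ≤ (n : ℝ) + 1)]
  gcongr

private lemma tsum_pnat' (f : ℕ+ → ℝ) : ∑' n : ℕ+, f n = ∑' n : ℕ, f n.succPNat :=
  (Equiv.pnatEquivNat.symm.tsum_eq f).symm

private lemma succPNat_cast_real (n : ℕ) : ((n.succPNat : ℕ+) : ℝ) = (n : ℝ) + 1 := by
  have : ((n.succPNat : ℕ+) : ℕ) = n + 1 := rfl
  rw [show ((n.succPNat : ℕ+) : ℝ) = (((n.succPNat : ℕ+) : ℕ) : ℝ) from rfl, this]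
  push_cast; ring

private lemma sq_div_four_le_exp {t : ℝ} (ht : 0 ≤ t) : t ^ 2 ≤ 4 * Real.exp t := by
  have h1 : t / 2 + 1 ≤ Real.exp (t / 2) := Real.add_one_le_exp (t / 2)
  have h2 : Real.exp t = Real.exp (t / 2) * Real.exp (t / 2) := by
    rw [← Real.exp_add]; ring_nf
  nlinarith [Real.exp_pos (t / 2)]

private lemma inv_cube_exp_bound {y : ℝ} (hy : 0 < y) :
    (y ^ 3)⁻¹ * Real.exp (-((π / 2) / y ^ 2)) ≤ 16 * y / π ^ 2 := by
  have hpi := Real.pi_pos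
  have ht : (0 : ℝ) ≤ (π / 2) / y ^ 2 := by positivity
  have h := sq_div_four_le_exp ht
  have hexp := Real.exp_pos ((π / 2) / y ^ 2)
  rw [Real.exp_neg]
  have e1 : (y ^ 3)⁻¹ * (Real.exp ((π / 2) / y ^ 2))⁻¹ = (y ^ 3 * Real.exp ((π / 2) / y ^ 2))⁻¹ := by
    rw [mul_inv]
  have hprod : 0 < y ^ 3 * Real.exp ((π / 2) / y ^ 2) := by positivity
  rw [e1, le_div_iff₀ (by positivity : (0:ℝ) < π ^ 2), inv_mul_le_iff₀ hprod]
  have e2 : ((π / 2) / y ^ 2) ^ 2 * (4 * y ^ 4) = π ^ 2 := by field_simp; ring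
  nlinarith [mul_le_mul_of_nonneg_right h (by positivity : (0:ℝ) ≤ y ^ 4),
    Real.exp_pos ((π / 2) / y ^ 2)]

/-- derivative of `z ↦ exp (-π m² / z²)`. -/

private lemma hasDerivAt_expA (m : ℝ) {y : ℝ} (hy : y ≠ 0) :
    HasDerivAt (fun z : ℝ => Real.exp (-π * m ^ 2 / z ^ 2))
      (Real.exp (-π * m ^ 2 / y ^ 2) * (2 * π * m ^ 2 / y ^ 3)) y := by
  have h1 : HasDerivAt (fun z : ℝ => z ^ 2) (2 * y) y := by
    simpa using hasDerivAt_pow 2 y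
  have h2 : HasDerivAt (fun z : ℝ => (z ^ 2)⁻¹) (-(2 * y) / (y ^ 2) ^ 2) y :=
    h1.inv (pow_ne_zero 2 hy)
  have h3 := (h2.const_mul (-π * m ^ 2)).exp
  have hfun : (fun z : ℝ => Real.exp (-π * m ^ 2 / z ^ 2))
      = (fun z : ℝ => Real.exp (-π * m ^ 2 * (z ^ 2)⁻¹)) := by
    funext z; rw [div_eq_mul_inv]
  rw [hfun]
  convert h3 using 1
  rw [div_eq_mul_inv (-π * m ^ 2) (y ^ 2)]
  congr 1
  field_simp

/-- derivative of `z ↦ exp (-π m² z²)`. -/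

private lemma hasDerivAt_expB (m : ℝ) (y : ℝ) :
    HasDerivAt (fun z : ℝ => Real.exp (-π * m ^ 2 * z ^ 2))
      (Real.exp (-π * m ^ 2 * y ^ 2) * (-2 * π * m ^ 2 * y)) y := by
  have h1 : HasDerivAt (fun z : ℝ => z ^ 2) (2 * y) y := by
    simpa using hasDerivAt_pow 2 y
  have h3 := (h1.const_mul (-π * m ^ 2)).exp
  convert h3 using 2
  ring

private lemma summable_exp_sq {c : ℝ} (hc : 0 < c) :
    Summable (fun n : ℕ => Real.exp (-c * ((n : ℝ) + 1) ^ 2)) := by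
  have := summable_master 0 hc
  simpa using this

private lemma int_tsum_even {c : ℝ} (hc : 0 < c) :
    ∑' n : ℤ, Real.exp (-c * (n : ℝ) ^ 2) =
      1 + 2 * ∑' n : ℕ, Real.exp (-c * ((n : ℝ) + 1) ^ 2) := by
  have hs : Summable (fun n : ℕ => Real.exp (-c * ((n : ℝ) + 1) ^ 2)) := summable_exp_sq hc
  have hs0 : Summable (fun n : ℕ => Real.exp (-c * (n : ℝ) ^ 2)) := by
    rw [← summable_nat_add_iff 1]
    exact hs.congr fun n => by congr 1 <;> push_cast <;> ring_nf
  have hf₁ : Summable (fun n : ℕ => Real.exp (-c * ((n : ℤ) : ℝ) ^ 2)) :=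
    hs0.congr fun n => by congr 1 <;> push_cast <;> ring_nf
  have hf₂ : Summable (fun n : ℕ => Real.exp (-c * ((-(n + 1) : ℤ) : ℝ) ^ 2)) :=
    hs.congr fun n => by congr 1 <;> push_cast <;> ring_nf
  rw [tsum_of_nat_of_neg_add_one (f := fun n : ℤ => Real.exp (-c * (n : ℝ) ^ 2)) hf₁ hf₂]
  have e1 : ∑' n : ℕ, Real.exp (-c * ((n : ℤ) : ℝ) ^ 2)
      = 1 + ∑' n : ℕ, Real.exp (-c * ((n : ℝ) + 1) ^ 2) := by
    rw [Summable.tsum_eq_zero_add hf₁]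
    congr 1
    · norm_num
    · exact tsum_congr fun n => by congr 1 <;> push_cast <;> ring_nf
  have e2 : ∑' n : ℕ, Real.exp (-c * ((-(n + 1) : ℤ) : ℝ) ^ 2)
      = ∑' n : ℕ, Real.exp (-c * ((n : ℝ) + 1) ^ 2) :=
    tsum_congr fun n => by congr 1 <;> push_cast <;> ring_nf
  rw [e1, e2]; ring

private lemma jacobi_identity {x : ℝ} (hx : 0 < x) :
    1 + 2 * (∑' n : ℕ, Real.exp (-π * ((n : ℝ) + 1) ^ 2 / x ^ 2)) =
      x * (1 + 2 * ∑' n : ℕ, Real.exp (-π * ((n : ℝ) + 1) ^ 2 * x ^ 2)) := by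
  have ha : (0 : ℝ) < (x ^ 2)⁻¹ := by positivity
  have key := Real.tsum_exp_neg_mul_int_sq ha
  have hL : ∑' n : ℤ, Real.exp (-π * (x ^ 2)⁻¹ * (n : ℝ) ^ 2)
      = 1 + 2 * ∑' n : ℕ, Real.exp (-π * ((n : ℝ) + 1) ^ 2 / x ^ 2) := by
    rw [show (fun n : ℤ => Real.exp (-π * (x ^ 2)⁻¹ * (n : ℝ) ^ 2))
        = (fun n : ℤ => Real.exp (-(π / x ^ 2) * (n : ℝ) ^ 2)) from
      funext fun n => by rw [show -π * (x ^ 2)⁻¹ * (n : ℝ) ^ 2 = -(π / x ^ 2) * (n : ℝ) ^ 2 by ring]]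
    rw [int_tsum_even (by positivity)]
    congr 2
    exact tsum_congr fun n => by rw [show -(π / x ^ 2) * ((n : ℝ) + 1) ^ 2
      = -π * ((n : ℝ) + 1) ^ 2 / x ^ 2 by ring]
  have hR : ∑' n : ℤ, Real.exp (-π / (x ^ 2)⁻¹ * (n : ℝ) ^ 2)
      = 1 + 2 * ∑' n : ℕ, Real.exp (-π * ((n : ℝ) + 1) ^ 2 * x ^ 2) := by
    have hx2 : (x : ℝ) ≠ 0 := ne_of_gt hx
    rw [show (fun n : ℤ => Real.exp (-π / (x ^ 2)⁻¹ * (n : ℝ) ^ 2))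
        = (fun n : ℤ => Real.exp (-(π * x ^ 2) * (n : ℝ) ^ 2)) from
      funext fun n => by rw [show -π / (x ^ 2)⁻¹ * (n : ℝ) ^ 2 = -(π * x ^ 2) * (n : ℝ) ^ 2 by
        field_simp]]
    rw [int_tsum_even (by positivity)]
    congr 2
    exact tsum_congr fun n => by rw [show -(π * x ^ 2) * ((n : ℝ) + 1) ^ 2
      = -π * ((n : ℝ) + 1) ^ 2 * x ^ 2 by ring]
  have hpow : (1 : ℝ) / ((x ^ 2)⁻¹) ^ ((1 : ℝ) / 2) = x := by
    have h2 : ((x ^ 2)⁻¹ : ℝ) = x ^ (-2 : ℝ) := by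
      rw [Real.rpow_neg hx.le, show ((2 : ℝ)) = ((2 : ℕ) : ℝ) by norm_num, Real.rpow_natCast]
    rw [h2, ← Real.rpow_mul hx.le]
    norm_num
    rw [Real.rpow_neg_one, inv_inv]
  rw [hL, hR] at key
  rw [key, hpow]

private lemma summable_A (k : ℕ) {x : ℝ} (hx : 0 < x) :
    Summable (fun n : ℕ => ((n : ℝ) + 1) ^ k * Real.exp (-π * ((n : ℝ) + 1) ^ 2 / x ^ 2)) :=
  (summable_master k (show (0:ℝ) < π / x ^ 2 by positivity)).congr fun n => by
    rw [show -(π / x ^ 2) * ((n : ℝ) + 1) ^ 2 = -π * ((n : ℝ) + 1) ^ 2 / x ^ 2 by ring]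

private lemma summable_B (k : ℕ) {x : ℝ} (hx : 0 < x) :
    Summable (fun n : ℕ => ((n : ℝ) + 1) ^ k * Real.exp (-π * ((n : ℝ) + 1) ^ 2 * x ^ 2)) :=
  (summable_master k (show (0:ℝ) < π * x ^ 2 by positivity)).congr fun n => by
    rw [show -(π * x ^ 2) * ((n : ℝ) + 1) ^ 2 = -π * ((n : ℝ) + 1) ^ 2 * x ^ 2 by ring]

private lemma one_le_m (n : ℕ) : (1 : ℝ) ≤ (n : ℝ) + 1 := by
  have : (0:ℝ) ≤ (n:ℝ) := Nat.cast_nonneg n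
  linarith

private lemma hasDerivAt_P {x : ℝ} (hx : 0 < x) :
    HasDerivAt (fun y : ℝ => ∑' n : ℕ, Real.exp (-π * ((n : ℝ) + 1) ^ 2 / y ^ 2))
      (∑' n : ℕ, Real.exp (-π * ((n : ℝ) + 1) ^ 2 / x ^ 2) * (2 * π * ((n : ℝ) + 1) ^ 2 / x ^ 3))
      x := by
  have hb : (0:ℝ) < x + 1 := by linarith
  have hcb : (0:ℝ) < π / (2 * (x + 1) ^ 2) := by positivity
  have hu : Summable (fun n : ℕ =>
      2 * π * ((n : ℝ) + 1) ^ 2 * Real.exp (-(π / (2 * (x + 1) ^ 2)) * ((n : ℝ) + 1) ^ 2)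
        * (16 * (x + 1) / π ^ 2)) := by
    refine (((summable_master 2 hcb).mul_left (2 * π)).mul_right (16 * (x + 1) / π ^ 2)).congr
      fun n => by ring
  refine hasDerivAt_tsum_of_isPreconnected hu (isOpen_Ioo (a := (0:ℝ)) (b := x + 1))
    (convex_Ioo _ _).isPreconnected
    (fun n y hy => hasDerivAt_expA ((n : ℝ) + 1) (ne_of_gt hy.1))
    (fun n y hy => ?_) (y₀ := x) (Set.mem_Ioo.mpr ⟨hx, by linarith⟩)
    (by simpa using summable_A 0 hx) (Set.mem_Ioo.mpr ⟨hx, by linarith⟩)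
  -- the bound
  obtain ⟨hy0, hyb⟩ := hy
  set m : ℝ := (n : ℝ) + 1 with hm
  have hm1 : (1:ℝ) ≤ m := one_le_m n
  have hsplit : -π * m ^ 2 / y ^ 2 ≤ -(π / (2 * (x + 1) ^ 2)) * m ^ 2 + -((π / 2) / y ^ 2) := by
    have hyy : y ^ 2 ≤ (x + 1) ^ 2 := by nlinarith
    have hts : ((x + 1) ^ 2)⁻¹ ≤ (y ^ 2)⁻¹ := by
      apply inv_anti₀ (by positivity) hyy
    have ht : (0:ℝ) < (y ^ 2)⁻¹ := by positivity
    simp only [div_eq_mul_inv, mul_inv]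
    nlinarith [mul_nonneg (mul_nonneg (by positivity : (0:ℝ) ≤ π / 2) (sq_nonneg m))
        (sub_nonneg.mpr hts),
      mul_nonneg (mul_nonneg (by positivity : (0:ℝ) ≤ π / 2) ht.le)
        (sub_nonneg.mpr (by nlinarith : (1:ℝ) ≤ m ^ 2)),
      Real.pi_pos]
  have hexp : Real.exp (-π * m ^ 2 / y ^ 2)
      ≤ Real.exp (-(π / (2 * (x + 1) ^ 2)) * m ^ 2) * Real.exp (-((π / 2) / y ^ 2)) := by
    rw [← Real.exp_add]
    exact Real.exp_le_exp.mpr hsplit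
  have hpos : (0:ℝ) < Real.exp (-π * m ^ 2 / y ^ 2) * (2 * π * m ^ 2 / y ^ 3) := by positivity
  rw [Real.norm_eq_abs, abs_of_pos hpos]
  calc Real.exp (-π * m ^ 2 / y ^ 2) * (2 * π * m ^ 2 / y ^ 3)
      = 2 * π * m ^ 2 * ((y ^ 3)⁻¹ * Real.exp (-π * m ^ 2 / y ^ 2)) := by
        rw [div_eq_mul_inv]; ring
    _ ≤ 2 * π * m ^ 2 * ((y ^ 3)⁻¹ * (Real.exp (-(π / (2 * (x + 1) ^ 2)) * m ^ 2)
          * Real.exp (-((π / 2) / y ^ 2)))) := by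
        have h4 : (0:ℝ) ≤ 2 * π * m ^ 2 := by positivity
        have h5 : (0:ℝ) ≤ (y ^ 3)⁻¹ := by positivity
        exact mul_le_mul_of_nonneg_left (mul_le_mul_of_nonneg_left hexp h5) h4
    _ = 2 * π * m ^ 2 * Real.exp (-(π / (2 * (x + 1) ^ 2)) * m ^ 2)
          * ((y ^ 3)⁻¹ * Real.exp (-((π / 2) / y ^ 2))) := by ring
    _ ≤ 2 * π * m ^ 2 * Real.exp (-(π / (2 * (x + 1) ^ 2)) * m ^ 2) * (16 * y / π ^ 2) := by
        have h6 : (0:ℝ) ≤ 2 * π * m ^ 2 * Real.exp (-(π / (2 * (x + 1) ^ 2)) * m ^ 2) := by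
          positivity
        exact mul_le_mul_of_nonneg_left (inv_cube_exp_bound hy0) h6
    _ ≤ 2 * π * m ^ 2 * Real.exp (-(π / (2 * (x + 1) ^ 2)) * m ^ 2) * (16 * (x + 1) / π ^ 2) := by
        have h6 : (0:ℝ) ≤ 2 * π * m ^ 2 * Real.exp (-(π / (2 * (x + 1) ^ 2)) * m ^ 2) := by
          positivity
        have : 16 * y / π ^ 2 ≤ 16 * (x + 1) / π ^ 2 := by gcongr <;> linarith
        exact mul_le_mul_of_nonneg_left this h6

private lemma hasDerivAt_Q {x : ℝ} (hx : 0 < x) :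
    HasDerivAt (fun y : ℝ => ∑' n : ℕ, Real.exp (-π * ((n : ℝ) + 1) ^ 2 * y ^ 2))
      (∑' n : ℕ, Real.exp (-π * ((n : ℝ) + 1) ^ 2 * x ^ 2) * (-2 * π * ((n : ℝ) + 1) ^ 2 * x))
      x := by
  have ha : (0:ℝ) < x / 2 := by linarith
  have hca : (0:ℝ) < π * (x / 2) ^ 2 := by positivity
  have hu : Summable (fun n : ℕ =>
      2 * π * ((n : ℝ) + 1) ^ 2 * Real.exp (-(π * (x / 2) ^ 2) * ((n : ℝ) + 1) ^ 2) * (x + 1)) := by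
    refine (((summable_master 2 hca).mul_left (2 * π)).mul_right (x + 1)).congr fun n => by ring
  refine hasDerivAt_tsum_of_isPreconnected hu (isOpen_Ioo (a := x / 2) (b := x + 1))
    (convex_Ioo _ _).isPreconnected
    (fun n y _ => hasDerivAt_expB ((n : ℝ) + 1) y)
    (fun n y hy => ?_) (y₀ := x) (Set.mem_Ioo.mpr ⟨by linarith, by linarith⟩)
    (by simpa using summable_B 0 hx) (Set.mem_Ioo.mpr ⟨by linarith, by linarith⟩)
  obtain ⟨hy0, hyb⟩ := hy
  have hy0' : (0:ℝ) < y := lt_trans ha hy0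
  set m : ℝ := (n : ℝ) + 1 with hm
  have hm1 : (1:ℝ) ≤ m := one_le_m n
  have habs : ‖Real.exp (-π * m ^ 2 * y ^ 2) * (-2 * π * m ^ 2 * y)‖
      = Real.exp (-π * m ^ 2 * y ^ 2) * (2 * π * m ^ 2 * y) := by
    rw [Real.norm_eq_abs, abs_mul, abs_of_pos (Real.exp_pos _),
      abs_of_nonpos (by nlinarith [Real.pi_pos, mul_nonneg (mul_nonneg (by positivity : (0:ℝ) ≤ 2 * π) (sq_nonneg m)) hy0'.le] : -2 * π * m ^ 2 * y ≤ 0)]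
    ring
  rw [habs]
  have hexp : Real.exp (-π * m ^ 2 * y ^ 2) ≤ Real.exp (-(π * (x / 2) ^ 2) * m ^ 2) := by
    apply Real.exp_le_exp.mpr
    have hq : (x / 2) ^ 2 ≤ y ^ 2 := by nlinarith
    nlinarith [mul_le_mul_of_nonneg_left hq (by positivity : (0:ℝ) ≤ π * m ^ 2)]
  calc Real.exp (-π * m ^ 2 * y ^ 2) * (2 * π * m ^ 2 * y)
      ≤ Real.exp (-(π * (x / 2) ^ 2) * m ^ 2) * (2 * π * m ^ 2 * (x + 1)) := by
        apply mul_le_mul hexp _ (by positivity) (Real.exp_pos _).le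
        have hyx : y ≤ x + 1 := le_of_lt hyb
        gcongr
    _ = 2 * π * m ^ 2 * Real.exp (-(π * (x / 2) ^ 2) * m ^ 2) * (x + 1) := by ring

private lemma zpow_neg3 {x : ℝ} : x ^ (-3 : ℤ) = (x ^ 3)⁻¹ := by
  rw [show (-3 : ℤ) = -(3 : ℕ) by norm_num, zpow_neg, zpow_natCast]

private lemma psi_eq_nat {x : ℝ} (hx : 0 < x) :
    psi x = 2 * ∑' n : ℕ,
      Real.exp (-π * ((n : ℝ) + 1) ^ 2 / x ^ 2) * (2 * π * ((n : ℝ) + 1) ^ 2 / x ^ 3) := by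
  rw [psi, tsum_pnat', zpow_neg3]
  have e1 : ∑' n : ℕ, (((n.succPNat : ℕ+) : ℝ)) ^ 2
        * Real.exp (-π * (((n.succPNat : ℕ+) : ℝ)) ^ 2 / x ^ 2)
      = ∑' n : ℕ, ((n : ℝ) + 1) ^ 2 * Real.exp (-π * ((n : ℝ) + 1) ^ 2 / x ^ 2) :=
    tsum_congr fun n => by rw [succPNat_cast_real]
  rw [e1]
  have e2 : ∑' n : ℕ, Real.exp (-π * ((n : ℝ) + 1) ^ 2 / x ^ 2) * (2 * π * ((n : ℝ) + 1) ^ 2 / x ^ 3)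
      = ∑' n : ℕ, (2 * π * (x ^ 3)⁻¹)
          * (((n : ℝ) + 1) ^ 2 * Real.exp (-π * ((n : ℝ) + 1) ^ 2 / x ^ 2)) :=
    tsum_congr fun n => by rw [div_eq_mul_inv]; ring
  rw [e2, tsum_mul_left]
  ring

private lemma psi_eq_B {x : ℝ} (hx : 0 < x) :
    psi x = 1 + 2 * ∑' n : ℕ,
      (1 - 2 * π * ((n : ℝ) + 1) ^ 2 * x ^ 2) * Real.exp (-π * ((n : ℝ) + 1) ^ 2 * x ^ 2) := by
  set P : ℝ → ℝ := fun y => ∑' n : ℕ, Real.exp (-π * ((n : ℝ) + 1) ^ 2 / y ^ 2) with hP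
  set Q : ℝ → ℝ := fun y => ∑' n : ℕ, Real.exp (-π * ((n : ℝ) + 1) ^ 2 * y ^ 2) with hQ
  set P' : ℝ := ∑' n : ℕ,
      Real.exp (-π * ((n : ℝ) + 1) ^ 2 / x ^ 2) * (2 * π * ((n : ℝ) + 1) ^ 2 / x ^ 3) with hP'
  set Q' : ℝ := ∑' n : ℕ,
      Real.exp (-π * ((n : ℝ) + 1) ^ 2 * x ^ 2) * (-2 * π * ((n : ℝ) + 1) ^ 2 * x) with hQ'
  have hdP : HasDerivAt (fun y => 2 * P y) (2 * P') x := (hasDerivAt_P hx).const_mul 2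
  have hdG : HasDerivAt (fun y => y * (1 + 2 * Q y) - 1)
      (1 * (1 + 2 * Q x) + x * (2 * Q')) x :=
    ((hasDerivAt_id x).mul (((hasDerivAt_Q hx).const_mul 2).const_add 1)).sub_const 1
  have heq : (fun y => 2 * P y) =ᶠ[nhds x] (fun y => y * (1 + 2 * Q y) - 1) := by
    filter_upwards [isOpen_Ioi.mem_nhds (Set.mem_Ioi.mpr hx)] with y hy
    have := jacobi_identity (Set.mem_Ioi.mp hy)
    simp only [hP, hQ]
    linarith
  have hdG' : HasDerivAt (fun y => y * (1 + 2 * Q y) - 1) (2 * P') x :=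
    hdP.congr_of_eventuallyEq heq.symm
  have huniq : 2 * P' = 1 * (1 + 2 * Q x) + x * (2 * Q') := hdG'.unique hdG
  -- identify Q' as a multiple of a clean sum
  have hQ'eq : Q' = -2 * π * x * ∑' n : ℕ,
      ((n : ℝ) + 1) ^ 2 * Real.exp (-π * ((n : ℝ) + 1) ^ 2 * x ^ 2) := by
    rw [hQ', ← tsum_mul_left]
    exact tsum_congr fun n => by ring
  have hBsum : ∑' n : ℕ, (1 - 2 * π * ((n : ℝ) + 1) ^ 2 * x ^ 2)
        * Real.exp (-π * ((n : ℝ) + 1) ^ 2 * x ^ 2)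
      = Q x - 2 * π * x ^ 2 * ∑' n : ℕ,
        ((n : ℝ) + 1) ^ 2 * Real.exp (-π * ((n : ℝ) + 1) ^ 2 * x ^ 2) := by
    rw [hQ, ← tsum_mul_left, ← Summable.tsum_sub (by simpa using summable_B 0 hx)
      ((summable_B 2 hx).mul_left (2 * π * x ^ 2))]
    exact tsum_congr fun n => by ring
  rw [psi_eq_nat hx, ← hP', hBsum]
  rw [hQ'eq] at huniq
  linarith [huniq]

private lemma summable_Bterm {z : ℝ} (hz : 0 < z) :
    Summable (fun n : ℕ => (1 - 2 * π * ((n : ℝ) + 1) ^ 2 * z ^ 2)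
      * Real.exp (-π * ((n : ℝ) + 1) ^ 2 * z ^ 2)) :=
  (((by simpa using summable_B 0 hz) : Summable
      (fun n : ℕ => Real.exp (-π * ((n : ℝ) + 1) ^ 2 * z ^ 2))).sub
    ((summable_B 2 hz).mul_left (2 * π * z ^ 2))).congr fun n => by ring

private lemma psi_eq_A {x : ℝ} (hx : 0 < x) :
    psi x = ∑' n : ℕ, 4 * π * ((n : ℝ) + 1) ^ 2
      * ((x ^ 3)⁻¹ * Real.exp (-π * ((n : ℝ) + 1) ^ 2 / x ^ 2)) := by
  rw [psi, tsum_pnat', zpow_neg3]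
  have e1 : ∑' n : ℕ, (((n.succPNat : ℕ+) : ℝ)) ^ 2
        * Real.exp (-π * (((n.succPNat : ℕ+) : ℝ)) ^ 2 / x ^ 2)
      = ∑' n : ℕ, ((n : ℝ) + 1) ^ 2 * Real.exp (-π * ((n : ℝ) + 1) ^ 2 / x ^ 2) :=
    tsum_congr fun n => by rw [succPNat_cast_real]
  rw [e1, ← tsum_mul_left]
  exact tsum_congr fun n => by ring

/-- termwise monotonicity, form A, on `(0, 7/5]`. -/

private lemma monoA (n : ℕ) :
    MonotoneOn (fun z : ℝ => (z ^ 3)⁻¹ * Real.exp (-π * ((n : ℝ) + 1) ^ 2 / z ^ 2))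
      (Set.Ioc 0 (7/5 : ℝ)) := by
  set m : ℝ := (n : ℝ) + 1 with hm
  have hm1 : (1:ℝ) ≤ m := one_le_m n
  have hm2 : (1:ℝ) ≤ m ^ 2 := by nlinarith
  apply monotoneOn_of_hasDerivWithinAt_nonneg (convex_Ioc _ _)
    (f' := fun z => -(3 * z ^ 2) / (z ^ 3) ^ 2 * Real.exp (-π * m ^ 2 / z ^ 2)
      + (z ^ 3)⁻¹ * (Real.exp (-π * m ^ 2 / z ^ 2) * (2 * π * m ^ 2 / z ^ 3)))
  · -- continuity
    apply ContinuousOn.mul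
    · exact ((continuous_pow 3).continuousOn).inv₀ fun z hz => pow_ne_zero 3 (ne_of_gt hz.1)
    · apply Real.continuous_exp.comp_continuousOn
      exact continuousOn_const.div ((continuous_pow 2).continuousOn)
        fun z hz => pow_ne_zero 2 (ne_of_gt hz.1)
  · -- HasDerivWithinAt
    intro z hz
    rw [interior_Ioc] at hz
    have hz0 : 0 < z := hz.1
    have h5 : HasDerivAt (fun z : ℝ => (z ^ 3)⁻¹) (-(3 * z ^ 2) / (z ^ 3) ^ 2) z := by
      have := (hasDerivAt_pow 3 z).fun_inv (pow_ne_zero 3 hz0.ne')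
      exact this.congr_deriv (by norm_num)
    exact ((h5.mul (hasDerivAt_expA m hz0.ne')).hasDerivWithinAt)
  · -- nonnegativity
    intro z hz
    rw [interior_Ioc] at hz
    have hz0 : 0 < z := hz.1
    have hz2 : z ^ 2 ≤ (7/5 : ℝ) ^ 2 := by nlinarith [hz.2]
    have key : -(3 * z ^ 2) / (z ^ 3) ^ 2 * Real.exp (-π * m ^ 2 / z ^ 2)
        + (z ^ 3)⁻¹ * (Real.exp (-π * m ^ 2 / z ^ 2) * (2 * π * m ^ 2 / z ^ 3))
        = Real.exp (-π * m ^ 2 / z ^ 2) * (2 * π * m ^ 2 - 3 * z ^ 2) / z ^ 6 := by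
      field_simp
      ring
    rw [key]
    apply div_nonneg _ (by positivity)
    apply mul_nonneg (Real.exp_pos _).le
    nlinarith [Real.pi_gt_three, mul_nonneg (by positivity : (0:ℝ) ≤ 2 * π)
      (sub_nonneg.mpr hm2)]

/-- termwise monotonicity, form B, on `[7/10, ∞)`. -/

private lemma monoB (n : ℕ) :
    MonotoneOn (fun z : ℝ => (1 - 2 * π * ((n : ℝ) + 1) ^ 2 * z ^ 2)
      * Real.exp (-π * ((n : ℝ) + 1) ^ 2 * z ^ 2)) (Set.Ici (7/10 : ℝ)) := by
  set m : ℝ := (n : ℝ) + 1 with hm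
  have hm1 : (1:ℝ) ≤ m := one_le_m n
  have hm2 : (1:ℝ) ≤ m ^ 2 := by nlinarith
  apply monotoneOn_of_hasDerivWithinAt_nonneg (convex_Ici _)
    (f' := fun z => -(2 * π * m ^ 2 * (2 * z)) * Real.exp (-π * m ^ 2 * z ^ 2)
      + (1 - 2 * π * m ^ 2 * z ^ 2) * (Real.exp (-π * m ^ 2 * z ^ 2) * (-2 * π * m ^ 2 * z)))
  · fun_prop
  · intro z hz
    have hu : HasDerivAt (fun z : ℝ => 1 - 2 * π * m ^ 2 * z ^ 2)
        (-(2 * π * m ^ 2 * (2 * z))) z := by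
      have := ((hasDerivAt_pow 2 z).const_mul (2 * π * m ^ 2)).const_sub 1
      exact this.congr_deriv (by norm_num)
    exact (hu.mul (hasDerivAt_expB m z)).hasDerivWithinAt
  · intro z hz
    rw [interior_Ici] at hz
    have hz0 : (0:ℝ) < z := lt_trans (by norm_num) hz
    have hz2 : (49:ℝ)/100 ≤ z ^ 2 := by nlinarith [le_of_lt (Set.mem_Ioi.mp hz)]
    have key : -(2 * π * m ^ 2 * (2 * z)) * Real.exp (-π * m ^ 2 * z ^ 2)
        + (1 - 2 * π * m ^ 2 * z ^ 2) * (Real.exp (-π * m ^ 2 * z ^ 2) * (-2 * π * m ^ 2 * z))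
        = Real.exp (-π * m ^ 2 * z ^ 2) * (2 * π * m ^ 2 * z) * (2 * π * m ^ 2 * z ^ 2 - 3) := by
      ring
    rw [key]
    apply mul_nonneg (by positivity)
    nlinarith [Real.pi_gt_d6, mul_nonneg (sub_nonneg.mpr hm2)
      (by positivity : (0:ℝ) ≤ 2 * π * z ^ 2)]

private lemma psi_mono_low {x y : ℝ} (hx : 0 < x) (hxy : x ≤ y) (hy : y ≤ 7/5) :
    psi x ≤ psi y := by
  have hy0 : 0 < y := lt_of_lt_of_le hx hxy
  rw [psi_eq_A hx, psi_eq_A hy0]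
  have hxm : x ∈ Set.Ioc (0:ℝ) (7/5) := ⟨hx, le_trans hxy hy⟩
  have hym : y ∈ Set.Ioc (0:ℝ) (7/5) := ⟨hy0, hy⟩
  apply Summable.tsum_le_tsum
  · intro n
    have := monoA n hxm hym hxy
    have h4 : (0:ℝ) ≤ 4 * π * ((n : ℝ) + 1) ^ 2 := by positivity
    exact mul_le_mul_of_nonneg_left this h4
  · exact ((summable_A 2 hx).mul_left (4 * π * (x ^ 3)⁻¹)).congr fun n => by ring
  · exact ((summable_A 2 hy0).mul_left (4 * π * (y ^ 3)⁻¹)).congr fun n => by ring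

private lemma psi_mono_high {x y : ℝ} (hx : (7/10:ℝ) ≤ x) (hxy : x ≤ y) :
    psi x ≤ psi y := by
  have hx0 : (0:ℝ) < x := lt_of_lt_of_le (by norm_num) hx
  have hy0 : (0:ℝ) < y := lt_of_lt_of_le hx0 hxy
  rw [psi_eq_B hx0, psi_eq_B hy0]
  have h := Summable.tsum_le_tsum (fun n => monoB n (Set.mem_Ici.mpr hx)
    (Set.mem_Ici.mpr (le_trans hx hxy)) hxy) (summable_Bterm hx0) (summable_Bterm hy0)
  linarith

lemma psi_monotone : MonotoneOn psi (Set.Ioi (0 : ℝ)) := by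
  intro x hx y hy hxy
  rcases le_or_gt y (7/5 : ℝ) with h | h
  · exact psi_mono_low hx hxy h
  · rcases le_or_gt (7/10 : ℝ) x with h' | h'
    · exact psi_mono_high h' hxy
    · calc psi x ≤ psi 1 := psi_mono_low hx (by linarith) (by norm_num)
        _ ≤ psi y := psi_mono_high (by norm_num) (by linarith)

noncomputable def C₀ : ℝ := ∑' n : ℕ, ((n : ℝ) + 1) ^ 2 * Real.exp (-(π/2) * ((n : ℝ) + 1) ^ 2)

noncomputable def K₁ : ℝ := ∑' n : ℕ, Real.exp (-(π/4) * ((n : ℝ) + 1) ^ 2)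

private lemma C₀_nonneg : 0 ≤ C₀ := tsum_nonneg fun n => by positivity

private lemma K₁_nonneg : 0 ≤ K₁ := tsum_nonneg fun n => by positivity

private lemma psi_nonneg {x : ℝ} (hx : 0 < x) : 0 ≤ psi x := by
  rw [psi_eq_A hx]
  exact tsum_nonneg fun n => by positivity

private lemma psi_le_of_le_one {x : ℝ} (hx : 0 < x) (hx1 : x ≤ 1) :
    psi x ≤ (64 / π * C₀) * x := by
  have hsum := summable_master 2 (show (0:ℝ) < π/2 by positivity)
  have step1 : psi x ≤ 4 * π * ((x ^ 3)⁻¹ * Real.exp (-((π/2) / x ^ 2))) * C₀ := by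
    rw [psi_eq_A hx, C₀, ← tsum_mul_left]
    apply Summable.tsum_le_tsum _ (((summable_A 2 hx).mul_left (4 * π * (x ^ 3)⁻¹)).congr fun n => by ring)
      (hsum.mul_left _)
    intro n
    set m : ℝ := (n : ℝ) + 1 with hm
    have hm1 : (1:ℝ) ≤ m := one_le_m n
    have ht1 : (1:ℝ) ≤ (x ^ 2)⁻¹ := by
      rw [le_inv_comm₀] <;> nlinarith
    have hexp : Real.exp (-π * m ^ 2 / x ^ 2)
        ≤ Real.exp (-(π/2) * m ^ 2) * Real.exp (-((π/2) / x ^ 2)) := by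
      rw [← Real.exp_add]
      apply Real.exp_le_exp.mpr
      simp only [div_eq_mul_inv]
      have hm2 : (1:ℝ) ≤ m ^ 2 := by nlinarith
      have hA : (0:ℝ) ≤ (π/2) * m ^ 2 * ((x ^ 2)⁻¹ - 1) := by
        apply mul_nonneg (by positivity) (by linarith)
      have hB : (0:ℝ) ≤ (π/2) * (x ^ 2)⁻¹ * (m ^ 2 - 1) := by
        apply mul_nonneg (by positivity) (by linarith)
      nlinarith [hA, hB]
    calc 4 * π * m ^ 2 * ((x ^ 3)⁻¹ * Real.exp (-π * m ^ 2 / x ^ 2))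
        ≤ 4 * π * m ^ 2 * ((x ^ 3)⁻¹
            * (Real.exp (-(π/2) * m ^ 2) * Real.exp (-((π/2) / x ^ 2)))) := by
          apply mul_le_mul_of_nonneg_left (mul_le_mul_of_nonneg_left hexp (by positivity))
            (by positivity)
      _ = 4 * π * ((x ^ 3)⁻¹ * Real.exp (-((π/2) / x ^ 2)))
            * (m ^ 2 * Real.exp (-(π/2) * m ^ 2)) := by ring
  calc psi x ≤ 4 * π * ((x ^ 3)⁻¹ * Real.exp (-((π/2) / x ^ 2))) * C₀ := step1
    _ ≤ 4 * π * (16 * x / π ^ 2) * C₀ := by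
        apply mul_le_mul_of_nonneg_right (mul_le_mul_of_nonneg_left (inv_cube_exp_bound hx)
          (by positivity)) C₀_nonneg
    _ = (64 / π * C₀) * x := by
        field_simp
        ring

lemma psi_tendsto_zero : Tendsto psi (nhdsWithin 0 (Set.Ioi (0:ℝ))) (nhds 0) := by
  have hC : Tendsto (fun x : ℝ => (64 / π * C₀) * x) (nhdsWithin 0 (Set.Ioi (0:ℝ))) (nhds 0) := by
    have hc : Continuous (fun x : ℝ => (64 / π * C₀) * x) := continuous_const.mul continuous_id
    have := (hc.tendsto (0:ℝ)).mono_left (nhdsWithin_le_nhds (s := Set.Ioi (0:ℝ)))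
    simpa using this
  have hev : ∀ᶠ x in nhdsWithin 0 (Set.Ioi (0:ℝ)), 0 < x ∧ x < 1 := by
    filter_upwards [self_mem_nhdsWithin,
      nhdsWithin_le_nhds (Iio_mem_nhds (by norm_num : (0:ℝ) < 1))] with x h1 h2
    exact ⟨h1, h2⟩
  apply squeeze_zero' (hev.mono fun x hx => psi_nonneg hx.1)
    (hev.mono fun x hx => psi_le_of_le_one hx.1 hx.2.le) hC

private lemma psi_sub_one_bound {x : ℝ} (hx : 1 ≤ x) :
    ‖psi x - 1‖ ≤ 10 * K₁ * Real.exp (-(π/4 * x ^ 2)) := by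
  have hx0 : (0:ℝ) < x := lt_of_lt_of_le one_pos hx
  set T := ∑' n : ℕ, (1 - 2 * π * ((n : ℝ) + 1) ^ 2 * x ^ 2)
    * Real.exp (-π * ((n : ℝ) + 1) ^ 2 * x ^ 2) with hT
  have hpsi : psi x - 1 = 2 * T := by rw [psi_eq_B hx0]; ring
  have hbound : ∀ n : ℕ, ‖(1 - 2 * π * ((n : ℝ) + 1) ^ 2 * x ^ 2)
      * Real.exp (-π * ((n : ℝ) + 1) ^ 2 * x ^ 2)‖
      ≤ 5 * Real.exp (-(π/4 * x ^ 2)) * Real.exp (-(π/4) * ((n : ℝ) + 1) ^ 2) := by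
    intro n
    set m : ℝ := (n : ℝ) + 1 with hm
    have hm1 : (1:ℝ) ≤ m := one_le_m n
    set t : ℝ := π * m ^ 2 * x ^ 2 with ht
    have ht0 : 0 < t := by positivity
    have h1 : ‖(1 - 2 * t) * Real.exp (-t)‖ ≤ (1 + 2 * t) * Real.exp (-t) := by
      rw [norm_mul, Real.norm_eq_abs, Real.norm_eq_abs, abs_of_pos (Real.exp_pos _)]
      apply mul_le_mul_of_nonneg_right _ (Real.exp_pos _).le
      rw [abs_le]
      constructor <;> linarith
    have h2 : (1 + 2 * t) * Real.exp (-t) ≤ 5 * Real.exp (-(t/2)) := by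
      have key : 1 + 2 * t ≤ 5 * Real.exp (t/2) := by
        have := Real.add_one_le_exp (t/2)
        nlinarith [Real.exp_pos (t/2)]
      calc (1 + 2 * t) * Real.exp (-t) ≤ 5 * Real.exp (t/2) * Real.exp (-t) :=
            mul_le_mul_of_nonneg_right key (Real.exp_pos _).le
        _ = 5 * Real.exp (-(t/2)) := by rw [mul_assoc, ← Real.exp_add]; ring_nf
    have h3 : Real.exp (-(t/2)) ≤ Real.exp (-(π/4 * x ^ 2)) * Real.exp (-(π/4) * m ^ 2) := by
      rw [← Real.exp_add]
      apply Real.exp_le_exp.mpr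
      rw [ht]
      have hm2 : (1:ℝ) ≤ m ^ 2 := by nlinarith
      have hx2 : (1:ℝ) ≤ x ^ 2 := by nlinarith
      have hA : (0:ℝ) ≤ (π/4) * x ^ 2 * (m ^ 2 - 1) := by
        apply mul_nonneg (by positivity) (by linarith)
      have hB : (0:ℝ) ≤ (π/4) * m ^ 2 * (x ^ 2 - 1) := by
        apply mul_nonneg (by positivity) (by linarith)
      nlinarith [hA, hB]
    calc ‖(1 - 2 * π * m ^ 2 * x ^ 2) * Real.exp (-π * m ^ 2 * x ^ 2)‖
        = ‖(1 - 2 * t) * Real.exp (-t)‖ := by rw [ht]; ring_nf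
      _ ≤ (1 + 2 * t) * Real.exp (-t) := h1
      _ ≤ 5 * Real.exp (-(t/2)) := h2
      _ ≤ 5 * (Real.exp (-(π/4 * x ^ 2)) * Real.exp (-(π/4) * m ^ 2)) :=
          mul_le_mul_of_nonneg_left h3 (by norm_num)
      _ = 5 * Real.exp (-(π/4 * x ^ 2)) * Real.exp (-(π/4) * m ^ 2) := by ring
  have hKs : Summable (fun n : ℕ => Real.exp (-(π/4) * ((n : ℝ) + 1) ^ 2)) := by
    simpa using summable_master 0 (show (0:ℝ) < π/4 by positivity)
  have hnorm_sum : Summable (fun n : ℕ => ‖(1 - 2 * π * ((n : ℝ) + 1) ^ 2 * x ^ 2)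
      * Real.exp (-π * ((n : ℝ) + 1) ^ 2 * x ^ 2)‖) := by
    apply Summable.of_nonneg_of_le (fun n => norm_nonneg _) hbound
      (hKs.mul_left _)
  have hTle : ‖T‖ ≤ 5 * Real.exp (-(π/4 * x ^ 2)) * K₁ := by
    calc ‖T‖ ≤ ∑' n : ℕ, ‖(1 - 2 * π * ((n : ℝ) + 1) ^ 2 * x ^ 2)
        * Real.exp (-π * ((n : ℝ) + 1) ^ 2 * x ^ 2)‖ := norm_tsum_le_tsum_norm hnorm_sum
      _ ≤ ∑' n : ℕ, 5 * Real.exp (-(π/4 * x ^ 2)) * Real.exp (-(π/4) * ((n : ℝ) + 1) ^ 2) :=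
          Summable.tsum_le_tsum hbound hnorm_sum (hKs.mul_left _)
      _ = 5 * Real.exp (-(π/4 * x ^ 2)) * K₁ := by rw [tsum_mul_left, K₁]
  rw [hpsi, norm_mul]
  have : ‖(2:ℝ)‖ = 2 := by norm_num
  rw [this]
  linarith

lemma psi_tendsto_one : Tendsto psi atTop (nhds 1) := by
  have hg : Tendsto (fun x : ℝ => 10 * K₁ * Real.exp (-(π/4 * x ^ 2))) atTop (nhds 0) := by
    have h1 : Tendsto (fun x : ℝ => π/4 * x ^ 2) atTop atTop :=
      (tendsto_pow_atTop (by norm_num)).const_mul_atTop (by positivity)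
    have h2 : Tendsto (fun x : ℝ => Real.exp (-(π/4 * x ^ 2))) atTop (nhds 0) := by
      exact Real.tendsto_exp_neg_atTop_nhds_zero.comp h1
    simpa using h2.const_mul (10 * K₁)
  have key : Tendsto (fun x => psi x - 1) atTop (nhds 0) := by
    apply squeeze_zero_norm' _ hg
    filter_upwards [eventually_ge_atTop (1:ℝ)] with x hx
    exact psi_sub_one_bound hx
  have := key.add (tendsto_const_nhds (α := ℝ) (x := (1:ℝ)) (f := atTop))
  simpa using this

theorem psi_cdf_properties :
    MonotoneOn psi (Set.Ioi (0 : ℝ)) ∧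
    Tendsto psi (nhdsWithin 0 (Set.Ioi (0 : ℝ))) (nhds 0) ∧
    Tendsto psi atTop (nhds 1) := by
  exact ⟨psi_monotone, psi_tendsto_zero, psi_tendsto_one⟩
end
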